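/- (Lemma 7: uniform convergence of the empirical KL divergence.) Fix K ≥ 2, m ≥ 2, c_0 > 0 and θ ∈ Θ_{c_0}. For θ′ ∈ Θ_{c_0} let KL(θ′) = Σ_{x∈[V]^m} p_{θ,m}(x) log( p_{θ,m}(x)/p_{θ′,m}(x) ) and, for X_1,…,X_n i.i.d. with law p_{θ,m}, let KL̂_n(θ′) = (1/n) Σ_{i=1}^n log( p_{θ,m}(X_i)/p_{θ′,m}(X_i) ). Then there exists a constant C > 0 depending only on θ, c_0, m, V, K and ν_0 such that for every n ≥ 1, E[ sup over θ′ ∈ Θ_{c_0} with KL(θ′) > 0 of |KL̂_n(θ′) − KL(θ′)| / sqrt(KL(θ′)) ] ≤ C/√n. -/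

import Mathlib

open MeasureTheory Filter

noncomputable section

namespace TopicModel

/-- The probability simplex in `ℝ^K`. -/
def simplex (K : ℕ) : Set (Fin K → ℝ) := {h | (∀ k, 0 ≤ h k) ∧ ∑ k, h k = 1}

/-- The parameter set `Θ_{c₀}`: `K` topic vectors, each a probability vector on `[V]`
with all entries at least `c₀`. -/
def Theta (c0 : ℝ) (V K : ℕ) : Set (Fin K → Fin V → ℝ) :=
  {θ | (∀ k ℓ, c0 ≤ θ k ℓ) ∧ ∀ k, ∑ ℓ, θ k ℓ = 1}

/-- `θ` is a tuple of probability vectors. -/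
def IsParam {V K : ℕ} (θ : Fin K → Fin V → ℝ) : Prop :=
  (∀ k ℓ, 0 ≤ θ k ℓ) ∧ ∀ k, ∑ ℓ, θ k ℓ = 1

/-- Word probability `p_{θ,h}(v) = Σ_k h_k θ_k(v)`. -/
def pWord {V K : ℕ} (θ : Fin K → Fin V → ℝ) (h : Fin K → ℝ) (v : Fin V) : ℝ :=
  ∑ k, h k * θ k v

/-- Document probability given mixing vector `h`: `p_{θ,h}(x) = Π_i p_{θ,h}(x_i)`. -/
def pDoc {V K : ℕ} (m : ℕ) (θ : Fin K → Fin V → ℝ) (h : Fin K → ℝ)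
    (x : Fin m → Fin V) : ℝ :=
  ∏ i, pWord θ h (x i)

/-- Marginal document probability `p_{θ,m}(x) = ∫ p_{θ,h}(x) dν₀(h)`. -/
def pM {V K : ℕ} (ν0 : Measure (Fin K → ℝ)) (m : ℕ) (θ : Fin K → Fin V → ℝ)
    (x : Fin m → Fin V) : ℝ :=
  ∫ h, pDoc m θ h x ∂ν0

/-- `ℓ¹`-norm of a `K × V` array: `‖δ‖₁ = Σ_k Σ_ℓ |δ_k(ℓ)|`. -/
def norm1 {V K : ℕ} (δ : Fin K → Fin V → ℝ) : ℝ := ∑ k, ∑ ℓ, |δ k ℓ|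

/-- Wasserstein distance between parameters:
`d_W(θ,θ') = min_π Σ_k ‖θ_k − θ'_{π(k)}‖₁`. -/
def dW {V K : ℕ} (θ θ' : Fin K → Fin V → ℝ) : ℝ :=
  ⨅ π : Equiv.Perm (Fin K), ∑ k, ∑ ℓ, |θ k ℓ - θ' (π k) ℓ|

/-- `L¹` distance between the document pmfs of two parameters. -/
def distL1 {V K : ℕ} (ν0 : Measure (Fin K → ℝ)) (m : ℕ)
    (θ θ' : Fin K → Fin V → ℝ) : ℝ :=
  ∑ x : Fin m → Fin V, |pM ν0 m θ x - pM ν0 m θ' x|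

/-- The `p`-th order degeneracy criterion `𝔡_{m,p}(θ)`: the infimum over all
`δ` with `‖δ‖₁ = 1` and `Σ_ℓ δ_k(ℓ) = 0` for every `k`, of
`Σ_{x ∈ [V]^m} |∫ p_{θ,h}(x) Σ_{i₁<⋯<i_p} Π_t (δ_h(x_{i_t}) / p_{θ,h}(x_{i_t})) dν₀|`. -/
def degen {V K : ℕ} (ν0 : Measure (Fin K → ℝ)) (m : ℕ) (θ : Fin K → Fin V → ℝ)
    (p : ℕ) : ℝ :=
  sInf {r : ℝ | ∃ δ : Fin K → Fin V → ℝ, norm1 δ = 1 ∧ (∀ k, ∑ ℓ, δ k ℓ = 0) ∧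
    r = ∑ x : Fin m → Fin V,
      |∫ h, pDoc m θ h x *
        ∑ S ∈ Finset.powersetCard p (Finset.univ : Finset (Fin m)),
          ∏ i ∈ S, ((∑ k, h k * δ k (x i)) / pWord θ h (x i)) ∂ν0|}

/-- The order of degeneracy `𝔭(m;θ) ∈ ℕ ∪ {∞}`:
the least `p ∈ {1,…,m}` with `𝔡_{m,p}(θ) > 0`, or `∞` if none exists. -/
def pOrder {V K : ℕ} (ν0 : Measure (Fin K → ℝ)) (m : ℕ) (θ : Fin K → Fin V → ℝ) : ℕ∞ :=
  sInf ((↑) '' {p : ℕ | 1 ≤ p ∧ p ≤ m ∧ 0 < degen ν0 m θ p})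

/-- Assumption (A2) on the mixing measure `ν₀`: a Borel probability measure supported on the
simplex, exchangeable, with `E[h₁²] > E[h₁h₂]` and (when `K ≥ 3`)
`E[h₁³] + 2E[h₁h₂h₃] > 3E[h₁²h₂]`. -/
structure NiceMixing (K : ℕ) (ν0 : Measure (Fin K → ℝ)) : Prop where
  prob : IsProbabilityMeasure ν0
  support : ν0 (simplex K)ᶜ = 0
  exch : ∀ π : Equiv.Perm (Fin K), Measure.map (fun h => h ∘ π) ν0 = ν0
  mom2 : ∀ i j : Fin K, i ≠ j → ∫ h, h i * h j ∂ν0 < ∫ h, h i ^ 2 ∂ν0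
  mom3 : ∀ i j k : Fin K, i ≠ j → j ≠ k → i ≠ k →
    3 * ∫ h, h i ^ 2 * h j ∂ν0 < ∫ h, h i ^ 3 ∂ν0 + 2 * ∫ h, h i * h j * h k ∂ν0

/-- The equivalence class `Θ̃_{c₀}(θ)` of parameters inducing the same document pmf as `θ`. -/
def equivClass {V K : ℕ} (ν0 : Measure (Fin K → ℝ)) (m : ℕ) (c0 : ℝ)
    (θ : Fin K → Fin V → ℝ) : Set (Fin K → Fin V → ℝ) :=
  {θ' | θ' ∈ Theta c0 V K ∧ ∀ x : Fin m → Fin V, pM ν0 m θ' x = pM ν0 m θ x}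

/-- Probability of the event `A` under `n` i.i.d. draws from the pmf `p` on a finite set. -/
def prodProb {α : Type*} [Fintype α] (p : α → ℝ) (n : ℕ) (A : Set (Fin n → α)) : ℝ :=
  ∑ xs : Fin n → α, A.indicator (fun ys => ∏ i, p (ys i)) xs

end TopicModel

namespace TopicModel

/-- KL divergence between the document pmfs of two parameters. -/
def klD {V K : ℕ} (ν0 : Measure (Fin K → ℝ)) (m : ℕ) (θ θ' : Fin K → Fin V → ℝ) : ℝ :=
  ∑ x : Fin m → Fin V, pM ν0 m θ x * Real.log (pM ν0 m θ x / pM ν0 m θ' x)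


lemma sum_pi_prod {n : ℕ} {X : Type*} [Fintype X] [DecidableEq X] (F : Fin n → X → ℝ) :
    ∑ xs : Fin n → X, ∏ i, F i (xs i) = ∏ i, ∑ x, F i x := by
  rw [Finset.prod_univ_sum]
  simp [Fintype.piFinset_univ]

lemma two_log_le {t : ℝ} (ht : 1 ≤ t) : 2 * Real.log t ≤ t - t⁻¹ := by
  have key : MonotoneOn (fun t : ℝ => t - t⁻¹ - 2 * Real.log t) (Set.Ici 1) := by
    apply monotoneOn_of_deriv_nonneg (convex_Ici 1)
    · apply ContinuousOn.sub
      · exact (continuousOn_id.sub (continuousOn_inv₀.mono (by intro x hx; simp at hx ⊢; linarith)))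
      · exact (continuousOn_const.mul (Real.continuousOn_log.mono (by intro x hx; simp at hx ⊢; intro h; linarith)))
    · intro x hx
      rw [interior_Ici] at hx
      have hx0 : (0:ℝ) < x := lt_trans one_pos hx
      have h : HasDerivAt (fun t : ℝ => t - t⁻¹ - 2 * Real.log t)
          (1 - (-(x^2)⁻¹) - 2 * x⁻¹) x :=
        ((hasDerivAt_id x).sub (hasDerivAt_inv hx0.ne')).sub
          ((Real.hasDerivAt_log hx0.ne').const_mul 2)
      exact h.differentiableAt.differentiableWithinAt
    · intro x hx
      rw [interior_Ici] at hx
      have hx0 : (0:ℝ) < x := lt_trans one_pos hx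
      have h : HasDerivAt (fun t : ℝ => t - t⁻¹ - 2 * Real.log t)
          (1 - (-(x^2)⁻¹) - 2 * x⁻¹) x :=
        ((hasDerivAt_id x).sub (hasDerivAt_inv hx0.ne')).sub
          ((Real.hasDerivAt_log hx0.ne').const_mul 2)
      rw [h.deriv]
      have h2 : (x^2)⁻¹ = x⁻¹ * x⁻¹ := by rw [sq, mul_inv]
      nlinarith [sq_nonneg (1 - x⁻¹)]
  have := key (Set.self_mem_Ici) (Set.mem_Ici.mpr ht) ht
  simp only [Real.log_one, inv_one] at this
  linarith

lemma log_one_sub_le {s : ℝ} (h0 : 0 ≤ s) (h1 : s < 1) :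
    Real.log (1 - s) ≤ -s - s^2/2 := by
  have key : MonotoneOn (fun s : ℝ => -s - s^2/2 - Real.log (1 - s)) (Set.Ico 0 1) := by
    apply monotoneOn_of_deriv_nonneg (convex_Ico 0 1)
    · apply ContinuousOn.sub
      · exact (continuousOn_id.neg.sub ((continuousOn_id.pow 2).div_const 2))
      · apply ContinuousOn.comp Real.continuousOn_log
          (continuousOn_const.sub continuousOn_id)
        intro x hx
        simp only [Set.mem_Ico] at hx
        intro h
        simp only [Set.mem_singleton_iff, id_eq] at h
        have h2 : (1:ℝ) = x := by simp only [Pi.sub_apply, id_eq] at h; linarith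
        linarith [hx.2]
    · intro x hx
      rw [interior_Ico] at hx
      have hx1 : (0:ℝ) < 1 - x := by simp at hx; linarith [hx.2]
      have h : HasDerivAt (fun s : ℝ => -s - s^2/2 - Real.log (1 - s))
          (-1 - (2 * x^(2-1) * 1)/2 - ((1-x)⁻¹ * (0 - 1))) x := by
        apply HasDerivAt.sub
        · exact (hasDerivAt_id x).neg.sub (((hasDerivAt_id x).pow 2).div_const 2)
        · exact (Real.hasDerivAt_log hx1.ne').comp x
            ((hasDerivAt_const x 1).sub (hasDerivAt_id x))
      exact h.differentiableAt.differentiableWithinAt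
    · intro x hx
      rw [interior_Ico] at hx
      simp only [Set.mem_Ioo] at hx
      have hx1 : (0:ℝ) < 1 - x := by linarith [hx.2]
      have h : HasDerivAt (fun s : ℝ => -s - s^2/2 - Real.log (1 - s))
          (-1 - (2 * x^(2-1) * 1)/2 - ((1-x)⁻¹ * (0 - 1))) x := by
        apply HasDerivAt.sub
        · exact (hasDerivAt_id x).neg.sub (((hasDerivAt_id x).pow 2).div_const 2)
        · exact (Real.hasDerivAt_log hx1.ne').comp x
            ((hasDerivAt_const x 1).sub (hasDerivAt_id x))
      rw [h.deriv]
      have hinv : (1-x) * (1-x)⁻¹ = 1 := mul_inv_cancel₀ hx1.ne'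
      simp only [pow_one, mul_one]
      nlinarith [sq_nonneg x, mul_pos hx1 (inv_pos.mpr hx1)]
  have := key (Set.left_mem_Ico.mpr one_pos) (Set.mem_Ico.mpr ⟨h0, h1⟩) h0
  simp only [neg_zero, ne_eq, OfNat.ofNat_ne_zero, not_false_eq_true, zero_pow,
    zero_div, sub_zero, Real.log_one] at this
  linarith

lemma kl_term {p q : ℝ} (hp0 : 0 < p) (hp1 : p ≤ 1) (hq0 : 0 < q) (hq1 : q ≤ 1) :
    (p - q)^2/2 ≤ p * Real.log (p/q) - (p - q) := by
  rcases le_or_gt p q with hpq | hpq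
  · -- q ≥ p, use two_log_le with t = q/p ≥ 1
    have ht : 1 ≤ q / p := (one_le_div hp0).mpr hpq
    have hlog := two_log_le ht
    have hL : Real.log (q/p) = - Real.log (p/q) := by
      rw [← Real.log_inv, inv_div]
    rw [hL] at hlog
    have hinv : (q/p)⁻¹ = p/q := by rw [inv_div]
    rw [hinv] at hlog
    set L := Real.log (p/q) with hLdef
    -- hlog : 2 * (-L) ≤ q/p - p/q
    have h2 : p * q * (2 * (-L)) ≤ p * q * (q/p - p/q) :=
      mul_le_mul_of_nonneg_left hlog (by positivity)
    have h3 : p * q * (q/p - p/q) = q*q - p*p := by field_simp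
    rw [h3] at h2
    nlinarith [sq_nonneg (p - q), mul_nonneg (mul_nonneg hq0.le (sub_nonneg.mpr hq1)) (sq_nonneg (p-q))]
  · -- q < p, use log_one_sub_le with s = (p-q)/p
    have hs0 : 0 ≤ (p - q)/p := div_nonneg (by linarith) hp0.le
    have hs1 : (p - q)/p < 1 := by rw [div_lt_one hp0]; linarith
    have hlog := log_one_sub_le hs0 hs1
    have h1s : 1 - (p - q)/p = q / p := by field_simp; ring
    rw [h1s] at hlog
    have hL : Real.log (q/p) = - Real.log (p/q) := by
      rw [← Real.log_inv, inv_div]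
    rw [hL] at hlog
    set L := Real.log (p/q) with hLdef
    -- hlog : -L ≤ -((p-q)/p) - ((p-q)/p)^2/2
    have h2 : p^2 * (-L) ≤ p^2 * (-((p-q)/p) - ((p-q)/p)^2/2) :=
      mul_le_mul_of_nonneg_left hlog (by positivity)
    have h3 : p^2 * (-((p-q)/p) - ((p-q)/p)^2/2) = -(p*(p-q)) - (p-q)^2/2 := by
      field_simp
    rw [h3] at h2
    nlinarith [sq_nonneg (p - q), mul_nonneg (mul_nonneg hp0.le (sub_nonneg.mpr hp1)) (sq_nonneg (p-q))]

lemma abs_log_sub_le {a b c : ℝ} (hc : 0 < c) (ha : c ≤ a) (hb : c ≤ b) :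
    |Real.log a - Real.log b| ≤ |a - b| / c := by
  have key : ∀ u v : ℝ, c ≤ u → c ≤ v → Real.log u - Real.log v ≤ |u - v| / c := by
    intro u v hu hv
    have hu0 : 0 < u := lt_of_lt_of_le hc hu
    have hv0 : 0 < v := lt_of_lt_of_le hc hv
    rcases le_or_gt u v with h | h
    · have h1 : Real.log u ≤ Real.log v := Real.log_le_log hu0 h
      have h2 : (0:ℝ) ≤ |u - v| / c := div_nonneg (abs_nonneg _) hc.le
      linarith
    · have h1 : Real.log u - Real.log v = Real.log (u/v) := (Real.log_div hu0.ne' hv0.ne').symm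
      have h2 : Real.log (u/v) ≤ u/v - 1 := Real.log_le_sub_one_of_pos (by positivity)
      have h3 : u/v - 1 = (u - v)/v := by field_simp
      have h4 : (u - v)/v ≤ (u - v)/c :=
        div_le_div_of_nonneg_left (by linarith) hc hv
      have h5 : |u - v| = u - v := abs_of_pos (sub_pos.mpr h)
      rw [h1, h5]
      linarith
  rw [abs_sub_le_iff]
  refine ⟨key a b ha hb, ?_⟩
  rw [abs_sub_comm]
  exact key b a hb ha


section PMfacts

variable {V K m : ℕ} {c0 : ℝ} {ν0 : Measure (Fin K → ℝ)}

lemma theta_entry_le_one {θ' : Fin K → Fin V → ℝ} (hθ' : θ' ∈ Theta c0 V K)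
    (hc0 : 0 < c0) (k : Fin K) (v : Fin V) : θ' k v ≤ 1 := by
  obtain ⟨hlb, hsum⟩ := hθ'
  calc θ' k v ≤ ∑ ℓ, θ' k ℓ :=
        Finset.single_le_sum (fun ℓ _ => le_trans hc0.le (hlb k ℓ)) (Finset.mem_univ v)
    _ = 1 := hsum k

lemma pDoc_cont (θ' : Fin K → Fin V → ℝ) (x : Fin m → Fin V) :
    Continuous (fun h : Fin K → ℝ => pDoc m θ' h x) := by
  unfold pDoc pWord
  exact continuous_finset_prod _ fun i _ =>
    continuous_finset_sum _ fun k _ => (continuous_apply k).mul continuous_const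

lemma pWord_mem {θ' : Fin K → Fin V → ℝ} (hθ' : θ' ∈ Theta c0 V K) (hc0 : 0 < c0)
    {h : Fin K → ℝ} (hh : h ∈ simplex K) (v : Fin V) :
    c0 ≤ pWord θ' h v ∧ pWord θ' h v ≤ 1 := by
  obtain ⟨hh0, hh1⟩ := hh
  obtain ⟨hlb, hsum⟩ := hθ'
  constructor
  · calc c0 = ∑ k, h k * c0 := by rw [← Finset.sum_mul, hh1, one_mul]
      _ ≤ ∑ k, h k * θ' k v :=
        Finset.sum_le_sum fun k _ => mul_le_mul_of_nonneg_left (hlb k v) (hh0 k)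
  · calc pWord θ' h v = ∑ k, h k * θ' k v := rfl
      _ ≤ ∑ k, h k * 1 :=
        Finset.sum_le_sum fun k _ =>
          mul_le_mul_of_nonneg_left (theta_entry_le_one ⟨hlb, hsum⟩ hc0 k v) (hh0 k)
      _ = 1 := by simp [hh1]

lemma pDoc_mem {θ' : Fin K → Fin V → ℝ} (hθ' : θ' ∈ Theta c0 V K) (hc0 : 0 < c0)
    {h : Fin K → ℝ} (hh : h ∈ simplex K) (x : Fin m → Fin V) :
    c0^m ≤ pDoc m θ' h x ∧ pDoc m θ' h x ≤ 1 := by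
  constructor
  · calc c0^m = ∏ _i : Fin m, c0 := by simp
      _ ≤ ∏ i, pWord θ' h (x i) :=
        Finset.prod_le_prod (fun _ _ => hc0.le) (fun i _ => (pWord_mem hθ' hc0 hh (x i)).1)
  · exact Finset.prod_le_one
      (fun i _ => le_trans hc0.le (pWord_mem hθ' hc0 hh (x i)).1)
      (fun i _ => (pWord_mem hθ' hc0 hh (x i)).2)

lemma ae_simplex (hsupp : ν0 (simplex K)ᶜ = 0) : ∀ᵐ h ∂ν0, h ∈ simplex K := by
  rw [MeasureTheory.ae_iff]
  exact hsupp

lemma pDoc_integrable [IsProbabilityMeasure ν0] (hsupp : ν0 (simplex K)ᶜ = 0)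
    {θ' : Fin K → Fin V → ℝ} (hθ' : θ' ∈ Theta c0 V K) (hc0 : 0 < c0)
    (x : Fin m → Fin V) : Integrable (fun h => pDoc m θ' h x) ν0 := by
  apply (integrable_const (1:ℝ)).mono' (pDoc_cont θ' x).aestronglyMeasurable
  filter_upwards [ae_simplex hsupp] with h hh
  rw [Real.norm_eq_abs, abs_of_nonneg (le_trans (by positivity) (pDoc_mem hθ' hc0 hh x).1)]
  exact (pDoc_mem hθ' hc0 hh x).2

lemma pM_bounds [IsProbabilityMeasure ν0] (hsupp : ν0 (simplex K)ᶜ = 0)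
    {θ' : Fin K → Fin V → ℝ} (hθ' : θ' ∈ Theta c0 V K) (hc0 : 0 < c0)
    (x : Fin m → Fin V) : c0^m ≤ pM ν0 m θ' x ∧ pM ν0 m θ' x ≤ 1 := by
  have hint := pDoc_integrable hsupp hθ' hc0 x
  constructor
  · calc c0^m = ∫ _h, (c0^m : ℝ) ∂ν0 := by simp
      _ ≤ ∫ h, pDoc m θ' h x ∂ν0 := by
          apply integral_mono_ae (integrable_const _) hint
          filter_upwards [ae_simplex hsupp] with h hh
          exact (pDoc_mem hθ' hc0 hh x).1
  · calc pM ν0 m θ' x ≤ ∫ _h, (1:ℝ) ∂ν0 := by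
          apply integral_mono_ae hint (integrable_const _)
          filter_upwards [ae_simplex hsupp] with h hh
          exact (pDoc_mem hθ' hc0 hh x).2
      _ = 1 := by simp

lemma pM_sum_one [IsProbabilityMeasure ν0] (hsupp : ν0 (simplex K)ᶜ = 0)
    {θ' : Fin K → Fin V → ℝ} (hθ' : θ' ∈ Theta c0 V K) (hc0 : 0 < c0) :
    ∑ x : Fin m → Fin V, pM ν0 m θ' x = 1 := by
  have : ∑ x : Fin m → Fin V, pM ν0 m θ' x
      = ∫ h, (∑ x : Fin m → Fin V, pDoc m θ' h x) ∂ν0 := by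
    rw [integral_finset_sum]
    · rfl
    · exact fun x _ => pDoc_integrable hsupp hθ' hc0 x
  rw [this]
  have hone : ∀ᵐ h ∂ν0, (∑ x : Fin m → Fin V, pDoc m θ' h x) = 1 := by
    filter_upwards [ae_simplex hsupp] with h hh
    have hsum : ∑ x : Fin m → Fin V, pDoc m θ' h x = ∏ i : Fin m, ∑ v, pWord θ' h v :=
      sum_pi_prod (fun _ v => pWord θ' h v)
    rw [hsum]
    have hv : ∑ v, pWord θ' h v = 1 := by
      unfold pWord
      rw [Finset.sum_comm]
      simp only [← Finset.mul_sum]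
      simp [hθ'.2, hh.2]
    simp [hv]
  rw [integral_congr_ae hone]
  simp

end PMfacts


lemma sum_pi_prod' {n : ℕ} {X : Type*} [Fintype X] [DecidableEq X] (F : Fin n → X → ℝ) :
    ∑ xs : Fin n → X, ∏ i, F i (xs i) = ∏ i, ∑ x, F i x := by
  rw [Finset.prod_univ_sum]
  simp [Fintype.piFinset_univ]

lemma cross_moment {X : Type*} [Fintype X] [DecidableEq X] {p g : X → ℝ}
    (hpsum : ∑ x, p x = 1) (hg : ∑ x, p x * g x = 0) {n : ℕ} (i j : Fin n) :
    ∑ xs : Fin n → X, (∏ k, p (xs k)) * (g (xs i) * g (xs j))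
      = if i = j then ∑ x, p x * g x ^ 2 else 0 := by
  classical
  have hFx : ∀ xs : Fin n → X, (∏ k, p (xs k)) * (g (xs i) * g (xs j))
      = ∏ k, (p (xs k) * ((if k = i then g (xs k) else 1) * (if k = j then g (xs k) else 1))) := by
    intro xs
    have : ∏ k, (p (xs k) * ((if k = i then g (xs k) else 1) * (if k = j then g (xs k) else 1)))
        = (∏ k, p (xs k)) * ((∏ k, (if k = i then g (xs k) else 1)) * (∏ k, (if k = j then g (xs k) else 1))) := by
      rw [Finset.prod_mul_distrib, Finset.prod_mul_distrib]
    rw [this, Finset.prod_ite_eq' Finset.univ i (fun k => g (xs k)),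
      Finset.prod_ite_eq' Finset.univ j (fun k => g (xs k))]
    simp
  simp_rw [hFx]
  rw [sum_pi_prod' (fun k x => p x * ((if k = i then g x else 1) * (if k = j then g x else 1)))]
  by_cases hij : i = j
  · subst hij
    rw [if_pos rfl]
    rw [Finset.prod_eq_single_of_mem i (Finset.mem_univ i)
      (fun k _ hk => by simp [hk, hpsum])]
    simp [sq]
  · rw [if_neg hij]
    apply Finset.prod_eq_zero (Finset.mem_univ i)
    simp only [if_pos rfl, if_neg hij, mul_one]
    exact hg

lemma var_bound {X : Type*} [Fintype X] [DecidableEq X] {p : X → ℝ}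
    (hp0 : ∀ x, 0 ≤ p x) (hpsum : ∑ x, p x = 1) {n : ℕ} (hn : 1 ≤ n) :
    ∑ xs : Fin n → X, (∏ i, p (xs i)) *
        (∑ x, ((n:ℝ)⁻¹ * (∑ i, if xs i = x then (1:ℝ) else 0) - p x)^2) ≤ (n:ℝ)⁻¹ := by
  classical
  have hn0 : (0:ℝ) < n := by exact_mod_cast hn
  have hswap : ∑ xs : Fin n → X, (∏ i, p (xs i)) *
        (∑ x, ((n:ℝ)⁻¹ * (∑ i, if xs i = x then (1:ℝ) else 0) - p x)^2)
      = ∑ x0, ∑ xs : Fin n → X, (∏ i, p (xs i)) *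
        ((n:ℝ)⁻¹ * (∑ i, if xs i = x0 then (1:ℝ) else 0) - p x0)^2 := by
    simp_rw [Finset.mul_sum]
    rw [Finset.sum_comm]
  rw [hswap]
  have hmain : ∀ x0 : X, ∑ xs : Fin n → X, (∏ i, p (xs i)) *
      ((n:ℝ)⁻¹ * (∑ i, if xs i = x0 then (1:ℝ) else 0) - p x0)^2 ≤ p x0 * (n:ℝ)⁻¹ := by
    intro x0
    set g : X → ℝ := fun x => (if x = x0 then (1:ℝ) else 0) - p x0 with hgdef
    have hS1 : ∑ x, p x * g x = 0 := by
      simp only [hgdef, mul_sub, Finset.sum_sub_distrib, mul_ite, mul_one, mul_zero]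
      rw [Finset.sum_ite_eq' Finset.univ x0 p, ← Finset.sum_mul, hpsum]
      simp
    have hS2 : ∑ x, p x * g x ^ 2 ≤ p x0 := by
      have hterm : ∀ x, p x * g x ^ 2
          = (if x = x0 then p x * (1 - 2 * p x0) else 0) + p x * (p x0)^2 := by
        intro x
        by_cases hx : x = x0 <;> simp [hgdef, hx] <;> ring
      rw [Finset.sum_congr rfl (fun x _ => hterm x), Finset.sum_add_distrib,
        Finset.sum_ite_eq' Finset.univ x0 (fun x => p x * (1 - 2 * p x0)),
        ← Finset.sum_mul, hpsum]
      simp only [Finset.mem_univ, if_pos, one_mul]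
      nlinarith [sq_nonneg (p x0), hp0 x0]
    have hrw : ∀ xs : Fin n → X,
        ((n:ℝ)⁻¹ * (∑ i, if xs i = x0 then (1:ℝ) else 0) - p x0)^2
        = ((n:ℝ)⁻¹)^2 * (∑ i, g (xs i))^2 := by
      intro xs
      have hsg : ∑ i, g (xs i) = (∑ i, if xs i = x0 then (1:ℝ) else 0) - n * p x0 := by
        simp [hgdef, Finset.sum_sub_distrib, Finset.card_univ, mul_comm]
      have h2 : (n:ℝ)⁻¹ * ((∑ i, if xs i = x0 then (1:ℝ) else 0) - n * p x0)
          = (n:ℝ)⁻¹ * (∑ i, if xs i = x0 then (1:ℝ) else 0) - p x0 := by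
        field_simp
      rw [hsg, ← h2, mul_pow]
    simp_rw [hrw]
    have hsq : ∀ xs : Fin n → X, (∑ i, g (xs i))^2 = ∑ i, ∑ j, g (xs i) * g (xs j) := by
      intro xs
      rw [sq, Finset.sum_mul_sum]
    simp_rw [hsq]
    have hexp : ∑ xs : Fin n → X, (∏ i, p (xs i)) *
        (((n:ℝ)⁻¹)^2 * ∑ i, ∑ j, g (xs i) * g (xs j))
        = ((n:ℝ)⁻¹)^2 * ∑ i, ∑ j, ∑ xs : Fin n → X, (∏ k, p (xs k)) * (g (xs i) * g (xs j)) := by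
      simp_rw [Finset.mul_sum]
      rw [Finset.sum_comm]
      apply Finset.sum_congr rfl
      intro i _
      rw [Finset.sum_comm]
      apply Finset.sum_congr rfl
      intro j _
      apply Finset.sum_congr rfl
      intro xs _
      ring
    rw [hexp]
    have hcm : ∑ i : Fin n, ∑ j : Fin n, ∑ xs : Fin n → X, (∏ k, p (xs k)) * (g (xs i) * g (xs j))
        = (n:ℝ) * ∑ x, p x * g x ^ 2 := by
      have : ∀ i j : Fin n, ∑ xs : Fin n → X, (∏ k, p (xs k)) * (g (xs i) * g (xs j))
          = if i = j then ∑ x, p x * g x ^ 2 else 0 := fun i j => cross_moment hpsum hS1 i j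
      simp_rw [this]
      simp [Finset.sum_ite_eq, Finset.card_univ, mul_comm]
    rw [hcm]
    have : ((n:ℝ)⁻¹)^2 * ((n:ℝ) * ∑ x, p x * g x ^ 2) = (n:ℝ)⁻¹ * ∑ x, p x * g x ^ 2 := by
      field_simp
    rw [this]
    calc (n:ℝ)⁻¹ * ∑ x, p x * g x ^ 2 ≤ (n:ℝ)⁻¹ * p x0 :=
          mul_le_mul_of_nonneg_left hS2 (by positivity)
      _ = p x0 * (n:ℝ)⁻¹ := mul_comm _ _
  calc ∑ x0, ∑ xs : Fin n → X, (∏ i, p (xs i)) *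
        ((n:ℝ)⁻¹ * (∑ i, if xs i = x0 then (1:ℝ) else 0) - p x0)^2
      ≤ ∑ x0, p x0 * (n:ℝ)⁻¹ := Finset.sum_le_sum fun x0 _ => hmain x0
    _ = (n:ℝ)⁻¹ := by rw [← Finset.sum_mul, hpsum, one_mul]

section SupBound

variable {V K m : ℕ} {c0 : ℝ} {ν0 : Measure (Fin K → ℝ)}

lemma sup_bound [IsProbabilityMeasure ν0]
    (hsupp : ν0 (simplex K)ᶜ = 0) (hc0 : 0 < c0)
    {θ : Fin K → Fin V → ℝ} (hθ : θ ∈ Theta c0 V K)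
    {n : ℕ} (hn : 1 ≤ n) (xs : Fin n → Fin m → Fin V) :
    sSup {r : ℝ | ∃ θ' ∈ Theta c0 V K, 0 < klD ν0 m θ θ' ∧
            r = |(1 / (n : ℝ)) * ∑ i, Real.log (pM ν0 m θ (xs i) / pM ν0 m θ' (xs i))
                  - klD ν0 m θ θ'| / Real.sqrt (klD ν0 m θ θ')} ≤
      (Real.sqrt 2 / c0^m) *
        Real.sqrt (∑ x : Fin m → Fin V,
          ((n:ℝ)⁻¹ * (∑ i, if xs i = x then (1:ℝ) else 0) - pM ν0 m θ x)^2) := by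
  classical
  have hc0m : (0:ℝ) < c0^m := pow_pos hc0 m
  apply Real.sSup_le _ (by positivity)
  rintro r ⟨θ', hθ', hKL, rfl⟩
  have hn0 : (0:ℝ) < n := by exact_mod_cast hn
  set p := pM ν0 m θ with hpdef
  set q := pM ν0 m θ' with hqdef
  have hplb : ∀ x, c0^m ≤ p x := fun x => (pM_bounds hsupp hθ hc0 x).1
  have hpub : ∀ x, p x ≤ 1 := fun x => (pM_bounds hsupp hθ hc0 x).2
  have hqlb : ∀ x, c0^m ≤ q x := fun x => (pM_bounds hsupp hθ' hc0 x).1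
  have hqub : ∀ x, q x ≤ 1 := fun x => (pM_bounds hsupp hθ' hc0 x).2
  have hp0 : ∀ x, 0 < p x := fun x => lt_of_lt_of_le hc0m (hplb x)
  have hq0 : ∀ x, 0 < q x := fun x => lt_of_lt_of_le hc0m (hqlb x)
  have hpsum : ∑ x : Fin m → Fin V, p x = 1 := pM_sum_one hsupp hθ hc0
  have hqsum : ∑ x : Fin m → Fin V, q x = 1 := pM_sum_one hsupp hθ' hc0
  set L : (Fin m → Fin V) → ℝ := fun x => Real.log (p x) - Real.log (q x) with hLdef
  set Ph : (Fin m → Fin V) → ℝ :=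
    fun x => (n:ℝ)⁻¹ * (∑ i, if xs i = x then (1:ℝ) else 0) with hPhdef
  have hKLrw : klD ν0 m θ θ' = ∑ x : Fin m → Fin V, p x * L x := by
    apply Finset.sum_congr rfl
    intro x _
    rw [hLdef]
    rw [Real.log_div (hp0 x).ne' (hq0 x).ne']
  have hemp : (1 / (n : ℝ)) * ∑ i, Real.log (p (xs i) / q (xs i))
      = ∑ x : Fin m → Fin V, Ph x * L x := by
    have h1 : ∑ i, Real.log (p (xs i) / q (xs i)) = ∑ i, L (xs i) := by
      apply Finset.sum_congr rfl
      intro i _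
      rw [hLdef, Real.log_div (hp0 _).ne' (hq0 _).ne']
    have h2 : ∑ x : Fin m → Fin V, (∑ i, if xs i = x then (1:ℝ) else 0) * L x
        = ∑ i, L (xs i) := by
      simp_rw [Finset.sum_mul, ite_mul, one_mul, zero_mul]
      rw [Finset.sum_comm]
      apply Finset.sum_congr rfl
      intro i _
      rw [Finset.sum_ite_eq]
      simp
    rw [h1, ← h2, Finset.mul_sum]
    apply Finset.sum_congr rfl
    intro x _
    rw [hPhdef, one_div]
    ring
  have hdiffeq : (1 / (n : ℝ)) * ∑ i, Real.log (p (xs i) / q (xs i)) - klD ν0 m θ θ'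
      = ∑ x : Fin m → Fin V, (Ph x - p x) * L x := by
    rw [hemp, hKLrw, ← Finset.sum_sub_distrib]
    apply Finset.sum_congr rfl
    intro x _
    ring
  have hKLlb : ∑ x : Fin m → Fin V, (p x - q x)^2 ≤ 2 * klD ν0 m θ θ' := by
    have hsub : ∑ x : Fin m → Fin V, (p x - q x) = 0 := by
      rw [Finset.sum_sub_distrib, hpsum, hqsum]; ring
    have hterm : ∑ x : Fin m → Fin V, (p x - q x)^2/2
        ≤ ∑ x : Fin m → Fin V, (p x * Real.log (p x / q x) - (p x - q x)) :=
      Finset.sum_le_sum fun x _ => kl_term (hp0 x) (hpub x) (hq0 x) (hqub x)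
    rw [Finset.sum_sub_distrib, hsub, sub_zero, ← Finset.sum_div] at hterm
    have hkld : klD ν0 m θ θ' = ∑ x : Fin m → Fin V, p x * Real.log (p x / q x) := rfl
    linarith
  have hLsq : ∑ x : Fin m → Fin V, L x ^ 2 ≤ (2 * klD ν0 m θ θ') / (c0^m)^2 := by
    have h1 : ∀ x, L x ^ 2 ≤ ((p x - q x)/c0^m)^2 := by
      intro x
      have habs : |L x| ≤ |p x - q x| / c0^m := abs_log_sub_le hc0m (hplb x) (hqlb x)
      calc L x ^ 2 = |L x|^2 := (sq_abs _).symm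
        _ ≤ (|p x - q x| / c0^m)^2 := by
            apply pow_le_pow_left₀ (abs_nonneg _) habs
        _ = ((p x - q x)/c0^m)^2 := by rw [div_pow, div_pow, sq_abs]
    calc ∑ x : Fin m → Fin V, L x ^ 2
        ≤ ∑ x : Fin m → Fin V, ((p x - q x)/c0^m)^2 := Finset.sum_le_sum fun x _ => h1 x
      _ = (∑ x : Fin m → Fin V, (p x - q x)^2) / (c0^m)^2 := by
          simp_rw [div_pow]
          rw [← Finset.sum_div]
      _ ≤ (2 * klD ν0 m θ θ') / (c0^m)^2 :=
          (div_le_div_iff_of_pos_right (by positivity)).mpr hKLlb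
  have hCS : |∑ x : Fin m → Fin V, (Ph x - p x) * L x| ≤
      Real.sqrt (∑ x : Fin m → Fin V, (Ph x - p x)^2)
        * Real.sqrt (∑ x : Fin m → Fin V, L x ^ 2) := by
    have h := Finset.sum_mul_sq_le_sq_mul_sq Finset.univ (fun x => Ph x - p x) L
    rw [← Real.sqrt_sq_eq_abs,
      ← Real.sqrt_mul (Finset.sum_nonneg fun x _ => sq_nonneg (Ph x - p x))]
    exact Real.sqrt_le_sqrt h
  have hA : 0 < Real.sqrt (klD ν0 m θ θ') := Real.sqrt_pos.mpr hKL
  rw [div_le_iff₀ hA, hdiffeq]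
  have hsqL : Real.sqrt (∑ x : Fin m → Fin V, L x ^ 2)
      ≤ Real.sqrt 2 * Real.sqrt (klD ν0 m θ θ') / c0^m := by
    calc Real.sqrt (∑ x : Fin m → Fin V, L x ^ 2)
        ≤ Real.sqrt ((2 * klD ν0 m θ θ') / (c0^m)^2) := Real.sqrt_le_sqrt hLsq
      _ = Real.sqrt (2 * klD ν0 m θ θ') / Real.sqrt ((c0^m)^2) :=
          Real.sqrt_div (by positivity) _
      _ = Real.sqrt 2 * Real.sqrt (klD ν0 m θ θ') / c0^m := by
          rw [Real.sqrt_mul (by norm_num : (0:ℝ) ≤ 2), Real.sqrt_sq hc0m.le]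
  have hDpos : 0 ≤ Real.sqrt (∑ x : Fin m → Fin V, (Ph x - p x)^2) := Real.sqrt_nonneg _
  have hgoalD : (∑ x : Fin m → Fin V,
        ((n:ℝ)⁻¹ * (∑ i, if xs i = x then (1:ℝ) else 0) - p x)^2)
      = ∑ x : Fin m → Fin V, (Ph x - p x)^2 := by
    apply Finset.sum_congr rfl
    intro x _
    rw [hPhdef]
  rw [hgoalD]
  calc |∑ x : Fin m → Fin V, (Ph x - p x) * L x|
      ≤ Real.sqrt (∑ x : Fin m → Fin V, (Ph x - p x)^2)
          * Real.sqrt (∑ x : Fin m → Fin V, L x ^ 2) := hCS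
    _ ≤ Real.sqrt (∑ x : Fin m → Fin V, (Ph x - p x)^2)
          * (Real.sqrt 2 * Real.sqrt (klD ν0 m θ θ') / c0^m) :=
        mul_le_mul_of_nonneg_left hsqL hDpos
    _ = Real.sqrt 2 / c0^m * Real.sqrt (∑ x : Fin m → Fin V, (Ph x - p x)^2)
          * Real.sqrt (klD ν0 m θ θ') := by ring

end SupBound

/-- **Lemma 7 (uniform convergence of the empirical KL divergence).**
There exists `C > 0` such that for every `n ≥ 1`, the expectation (under `n` i.i.d.
documents from `p_{θ,m}`) of the supremum over `θ' ∈ Θ_{c₀}` with `KL(θ') > 0` of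
`|KL̂_n(θ') − KL(θ')| / √KL(θ')` is at most `C/√n`. -/
theorem empirical_kl_uniform_convergence
    {V K m : ℕ} (hV : 2 ≤ V) (hK : 2 ≤ K) (hm : 2 ≤ m) {c0 : ℝ} (hc0 : 0 < c0)
    (ν0 : Measure (Fin K → ℝ)) (hprob : IsProbabilityMeasure ν0)
    (hsupp : ν0 (simplex K)ᶜ = 0)
    (θ : Fin K → Fin V → ℝ) (hθ : θ ∈ Theta c0 V K) :
    ∃ C > (0 : ℝ), ∀ n : ℕ, 1 ≤ n →
      (∑ xs : Fin n → (Fin m → Fin V),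
        (∏ i, pM ν0 m θ (xs i)) *
          sSup {r : ℝ | ∃ θ' ∈ Theta c0 V K, 0 < klD ν0 m θ θ' ∧
            r = |(1 / (n : ℝ)) * ∑ i, Real.log (pM ν0 m θ (xs i) / pM ν0 m θ' (xs i))
                  - klD ν0 m θ θ'| / Real.sqrt (klD ν0 m θ θ')})
        ≤ C / Real.sqrt n := by
  classical
  haveI := hprob
  have hc0m : (0:ℝ) < c0^m := pow_pos hc0 m
  refine ⟨Real.sqrt 2 / c0^m, by positivity, ?_⟩
  intro n hn
  have hn0 : (0:ℝ) < n := by exact_mod_cast hn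
  have hplb : ∀ x : Fin m → Fin V, c0^m ≤ pM ν0 m θ x :=
    fun x => (pM_bounds hsupp hθ hc0 x).1
  have hp0 : ∀ x : Fin m → Fin V, (0:ℝ) ≤ pM ν0 m θ x :=
    fun x => le_trans hc0m.le (hplb x)
  have hpsum : ∑ x : Fin m → Fin V, pM ν0 m θ x = 1 := pM_sum_one hsupp hθ hc0
  have hw0 : ∀ xs : Fin n → (Fin m → Fin V), 0 ≤ ∏ i, pM ν0 m θ (xs i) :=
    fun xs => Finset.prod_nonneg fun i _ => hp0 (xs i)
  refine le_trans (Finset.sum_le_sum (fun xs _ =>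
    mul_le_mul_of_nonneg_left (sup_bound hsupp hc0 hθ hn xs) (hw0 xs))) ?_
  have hD0 : ∀ xs : Fin n → (Fin m → Fin V),
      0 ≤ ∑ x : Fin m → Fin V,
        ((n:ℝ)⁻¹ * (∑ i, if xs i = x then (1:ℝ) else 0) - pM ν0 m θ x)^2 :=
    fun xs => Finset.sum_nonneg fun x _ => sq_nonneg _
  have hwsum : ∑ xs : Fin n → (Fin m → Fin V), ∏ i, pM ν0 m θ (xs i) = 1 := by
    rw [sum_pi_prod' (fun _ x => pM ν0 m θ x)]
    simp [hpsum]
  have hvar := var_bound hp0 hpsum hn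
  have jensen : ∑ xs : Fin n → (Fin m → Fin V), (∏ i, pM ν0 m θ (xs i)) *
      Real.sqrt (∑ x : Fin m → Fin V,
        ((n:ℝ)⁻¹ * (∑ i, if xs i = x then (1:ℝ) else 0) - pM ν0 m θ x)^2)
      ≤ Real.sqrt ((n:ℝ)⁻¹) := by
    have hcs := Finset.sum_mul_sq_le_sq_mul_sq Finset.univ
      (fun xs : Fin n → (Fin m → Fin V) => Real.sqrt (∏ i, pM ν0 m θ (xs i)))
      (fun xs : Fin n → (Fin m → Fin V) => Real.sqrt (∏ i, pM ν0 m θ (xs i)) *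
        Real.sqrt (∑ x : Fin m → Fin V,
          ((n:ℝ)⁻¹ * (∑ i, if xs i = x then (1:ℝ) else 0) - pM ν0 m θ x)^2))
    have e1 : ∀ xs : Fin n → (Fin m → Fin V),
        Real.sqrt (∏ i, pM ν0 m θ (xs i)) * (Real.sqrt (∏ i, pM ν0 m θ (xs i)) *
          Real.sqrt (∑ x : Fin m → Fin V,
            ((n:ℝ)⁻¹ * (∑ i, if xs i = x then (1:ℝ) else 0) - pM ν0 m θ x)^2))
        = (∏ i, pM ν0 m θ (xs i)) * Real.sqrt (∑ x : Fin m → Fin V,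
            ((n:ℝ)⁻¹ * (∑ i, if xs i = x then (1:ℝ) else 0) - pM ν0 m θ x)^2) := by
      intro xs
      rw [← mul_assoc, Real.mul_self_sqrt (hw0 xs)]
    have e2 : ∀ xs : Fin n → (Fin m → Fin V),
        Real.sqrt (∏ i, pM ν0 m θ (xs i)) ^ 2 = ∏ i, pM ν0 m θ (xs i) :=
      fun xs => Real.sq_sqrt (hw0 xs)
    have e3 : ∀ xs : Fin n → (Fin m → Fin V),
        (Real.sqrt (∏ i, pM ν0 m θ (xs i)) * Real.sqrt (∑ x : Fin m → Fin V,
          ((n:ℝ)⁻¹ * (∑ i, if xs i = x then (1:ℝ) else 0) - pM ν0 m θ x)^2)) ^ 2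
        = (∏ i, pM ν0 m θ (xs i)) * (∑ x : Fin m → Fin V,
          ((n:ℝ)⁻¹ * (∑ i, if xs i = x then (1:ℝ) else 0) - pM ν0 m θ x)^2) := by
      intro xs
      rw [mul_pow, Real.sq_sqrt (hw0 xs), Real.sq_sqrt (hD0 xs)]
    rw [Finset.sum_congr rfl (fun xs _ => e1 xs), Finset.sum_congr rfl (fun xs _ => e2 xs),
      Finset.sum_congr rfl (fun xs _ => e3 xs), hwsum, one_mul] at hcs
    have h4 : (∑ xs : Fin n → (Fin m → Fin V), (∏ i, pM ν0 m θ (xs i)) *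
        Real.sqrt (∑ x : Fin m → Fin V,
          ((n:ℝ)⁻¹ * (∑ i, if xs i = x then (1:ℝ) else 0) - pM ν0 m θ x)^2)) ^ 2
        ≤ (n:ℝ)⁻¹ := le_trans hcs hvar
    have h5 : 0 ≤ ∑ xs : Fin n → (Fin m → Fin V), (∏ i, pM ν0 m θ (xs i)) *
        Real.sqrt (∑ x : Fin m → Fin V,
          ((n:ℝ)⁻¹ * (∑ i, if xs i = x then (1:ℝ) else 0) - pM ν0 m θ x)^2) :=
      Finset.sum_nonneg fun xs _ => mul_nonneg (hw0 xs) (Real.sqrt_nonneg _)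
    calc ∑ xs : Fin n → (Fin m → Fin V), (∏ i, pM ν0 m θ (xs i)) *
        Real.sqrt (∑ x : Fin m → Fin V,
          ((n:ℝ)⁻¹ * (∑ i, if xs i = x then (1:ℝ) else 0) - pM ν0 m θ x)^2)
        = Real.sqrt ((∑ xs : Fin n → (Fin m → Fin V), (∏ i, pM ν0 m θ (xs i)) *
          Real.sqrt (∑ x : Fin m → Fin V,
            ((n:ℝ)⁻¹ * (∑ i, if xs i = x then (1:ℝ) else 0) - pM ν0 m θ x)^2)) ^ 2) :=
          (Real.sqrt_sq h5).symm
      _ ≤ Real.sqrt ((n:ℝ)⁻¹) := Real.sqrt_le_sqrt h4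
  calc ∑ xs : Fin n → (Fin m → Fin V), (∏ i, pM ν0 m θ (xs i)) *
        (Real.sqrt 2 / c0^m * Real.sqrt (∑ x : Fin m → Fin V,
          ((n:ℝ)⁻¹ * (∑ i, if xs i = x then (1:ℝ) else 0) - pM ν0 m θ x)^2))
      = Real.sqrt 2 / c0^m * ∑ xs : Fin n → (Fin m → Fin V), (∏ i, pM ν0 m θ (xs i)) *
        Real.sqrt (∑ x : Fin m → Fin V,
          ((n:ℝ)⁻¹ * (∑ i, if xs i = x then (1:ℝ) else 0) - pM ν0 m θ x)^2) := by
        rw [Finset.mul_sum]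
        apply Finset.sum_congr rfl
        intro xs _
        ring
    _ ≤ Real.sqrt 2 / c0^m * Real.sqrt ((n:ℝ)⁻¹) :=
        mul_le_mul_of_nonneg_left jensen (by positivity)
    _ = Real.sqrt 2 / c0^m / Real.sqrt n := by
        rw [Real.sqrt_inv]
        rw [div_eq_mul_inv (Real.sqrt 2 / c0^m)]

end TopicModel
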